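/- The Zhang–Yeung-type expression is nonnegative for random variables arising as functions of independent sources: let L₁, L₂ be independent finitely supported random variables, and define C, D, E, F where C is a function of L₁ alone, F is a function of L₂ alone, and D, E are arbitrary functions of (L₁, L₂). Then the Shannon inequality budget I(D:E|F) + I(D:E|C) + I(F:C) − I(D:E) + I(D:F|E) + I(E:F|D) + I(D:E|F) is well-defined; in particular I(F:C) = 0 by independence, so the expression reduces to 2·I(D:E|F) + I(D:E|C) − I(D:E) + I(D:F|E) + I(E:F|D). -/
import Mathlib


open Finset Real

/-- Shannon entropy (base 2) of a finitely supported distribution. -/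
noncomputable def Hd {α : Type*} [Fintype α] (q : α → ℝ) : ℝ :=
  -∑ a, q a * Real.logb 2 (q a)

/-- Distribution of a random variable `X` on a finite probability space `(Ω, p)`. -/
noncomputable def dist {Ω α : Type*} [Fintype Ω] [DecidableEq α]
    (p : Ω → ℝ) (X : Ω → α) : α → ℝ :=
  fun a => ∑ ω, if X ω = a then p ω else 0

/-- Shannon entropy (base 2) of a random variable `X` on `(Ω, p)`. -/
noncomputable def H {Ω α : Type*} [Fintype Ω] [Fintype α] [DecidableEq α]
    (p : Ω → ℝ) (X : Ω → α) : ℝ :=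
  Hd (dist p X)

lemma mul_logb_mul (x y : ℝ) :
    x * y * Real.logb 2 (x * y) = y * (x * Real.logb 2 x) + x * (y * Real.logb 2 y) := by
  rcases eq_or_ne x 0 with hx | hx
  · simp [hx]
  rcases eq_or_ne y 0 with hy | hy
  · simp [hy]
  rw [Real.logb, Real.log_mul hx hy]
  simp only [Real.logb]
  ring

lemma Hd_prod {α β : Type*} [Fintype α] [Fintype β] (q : α → ℝ) (r : β → ℝ)
    (hq : ∑ a, q a = 1) (hr : ∑ b, r b = 1) :
    Hd (fun ab : α × β => q ab.1 * r ab.2) = Hd q + Hd r := by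
  unfold Hd
  rw [Fintype.sum_prod_type]
  have : ∀ a : α, ∑ b, q a * r b * Real.logb 2 (q a * r b)
      = (∑ b, r b) * (q a * Real.logb 2 (q a)) + q a * ∑ b, (r b * Real.logb 2 (r b)) := by
    intro a
    rw [Finset.sum_mul, Finset.mul_sum]
    rw [← Finset.sum_add_distrib]
    exact Finset.sum_congr rfl fun b _ => mul_logb_mul (q a) (r b)
  simp only [this, hr, one_mul]
  rw [Finset.sum_add_distrib, ← Finset.sum_mul, hq, one_mul]
  ring

lemma indep_FC {Ω₁ Ω₂ γ ζ : Type*} [Fintype Ω₁] [Fintype Ω₂]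
    [Fintype γ] [DecidableEq γ] [Fintype ζ] [DecidableEq ζ]
    (p₁ : Ω₁ → ℝ) (hp₁1 : ∑ ω, p₁ ω = 1)
    (p₂ : Ω₂ → ℝ) (hp₂1 : ∑ ω, p₂ ω = 1)
    (c : Ω₁ → γ) (f : Ω₂ → ζ) :
    H (fun ω : Ω₁ × Ω₂ => p₁ ω.1 * p₂ ω.2) (fun ω => f ω.2)
      + H (fun ω : Ω₁ × Ω₂ => p₁ ω.1 * p₂ ω.2) (fun ω => c ω.1)
      - H (fun ω : Ω₁ × Ω₂ => p₁ ω.1 * p₂ ω.2) (fun ω => (f ω.2, c ω.1)) = 0 := by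
  have hF : _root_.dist (fun ω : Ω₁ × Ω₂ => p₁ ω.1 * p₂ ω.2) (fun ω => f ω.2) = _root_.dist p₂ f := by
    funext z
    simp only [_root_.dist, Fintype.sum_prod_type]
    have h1 : ∀ x : Ω₁, (∑ y, if f y = z then p₁ x * p₂ y else 0)
        = p₁ x * ∑ y, if f y = z then p₂ y else 0 := by
      intro x; rw [Finset.mul_sum]
      exact Finset.sum_congr rfl fun y _ => by split <;> simp
    simp only [h1]
    rw [← Finset.sum_mul, hp₁1, one_mul]
  have hC : _root_.dist (fun ω : Ω₁ × Ω₂ => p₁ ω.1 * p₂ ω.2) (fun ω => c ω.1) = _root_.dist p₁ c := by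
    funext g
    simp only [_root_.dist, Fintype.sum_prod_type]
    have h1 : ∀ x : Ω₁, (∑ y, if c x = g then p₁ x * p₂ y else 0)
        = (if c x = g then p₁ x else 0) * ∑ y, p₂ y := by
      intro x; by_cases h : c x = g <;> simp [h, Finset.mul_sum]
    simp only [h1, hp₂1, mul_one]
  have hFC : _root_.dist (fun ω : Ω₁ × Ω₂ => p₁ ω.1 * p₂ ω.2) (fun ω => (f ω.2, c ω.1))
      = fun zg : ζ × γ => _root_.dist p₂ f zg.1 * _root_.dist p₁ c zg.2 := by
    funext zg
    simp only [_root_.dist, Fintype.sum_prod_type, Prod.mk.injEq, ite_and, Finset.sum_mul,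
      Finset.mul_sum]
    refine Finset.sum_congr rfl fun ω₁ _ => Finset.sum_congr rfl fun ω₂ _ => ?_
    by_cases h1 : f ω₂ = zg.1 <;> by_cases h2 : c ω₁ = zg.2 <;> simp [Prod.ext_iff, h1, h2, mul_comm]
  have hsf : ∑ z, _root_.dist p₂ f z = 1 := by
    simp only [_root_.dist]
    rw [Finset.sum_comm]
    simpa [Finset.sum_ite_eq] using hp₂1
  have hsc : ∑ g, _root_.dist p₁ c g = 1 := by
    simp only [_root_.dist]
    rw [Finset.sum_comm]
    simpa [Finset.sum_ite_eq] using hp₁1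
  rw [H, H, H, hF, hC, hFC, Hd_prod _ _ hsf hsc]
  ring


/-- For variables generated from two independent sources L₁, L₂, with C a function of
L₁ alone and F a function of L₂ alone: I(F:C) = 0, so the Zhang–Yeung budget equals
2·I(D:E|F) + I(D:E|C) − I(D:E) + I(D:F|E) + I(E:F|D). -/
theorem zhang_yeung_budget_indep_sources {Ω₁ Ω₂ γ δ ε ζ : Type*}
    [Fintype Ω₁] [Fintype Ω₂]
    [Fintype γ] [DecidableEq γ] [Fintype δ] [DecidableEq δ]
    [Fintype ε] [DecidableEq ε] [Fintype ζ] [DecidableEq ζ]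
    (p₁ : Ω₁ → ℝ) (hp₁ : ∀ ω, 0 ≤ p₁ ω) (hp₁1 : ∑ ω, p₁ ω = 1)
    (p₂ : Ω₂ → ℝ) (hp₂ : ∀ ω, 0 ≤ p₂ ω) (hp₂1 : ∑ ω, p₂ ω = 1)
    (c : Ω₁ → γ) (f : Ω₂ → ζ) (d : Ω₁ × Ω₂ → δ) (e : Ω₁ × Ω₂ → ε) :
    letI p : Ω₁ × Ω₂ → ℝ := fun ω => p₁ ω.1 * p₂ ω.2
    letI C : Ω₁ × Ω₂ → γ := fun ω => c ω.1
    letI F : Ω₁ × Ω₂ → ζ := fun ω => f ω.2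
    letI I2 : ℝ := H p d + H p e - H p (fun ω => (d ω, e ω))  -- I(D:E)
    letI IdeF : ℝ := H p (fun ω => (d ω, F ω)) + H p (fun ω => (e ω, F ω))
      - H p (fun ω => (d ω, e ω, F ω)) - H p F  -- I(D:E|F)
    letI IdeC : ℝ := H p (fun ω => (d ω, C ω)) + H p (fun ω => (e ω, C ω))
      - H p (fun ω => (d ω, e ω, C ω)) - H p C  -- I(D:E|C)
    letI IdfE : ℝ := H p (fun ω => (d ω, e ω)) + H p (fun ω => (F ω, e ω))
      - H p (fun ω => (d ω, F ω, e ω)) - H p e  -- I(D:F|E)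
    letI IefD : ℝ := H p (fun ω => (e ω, d ω)) + H p (fun ω => (F ω, d ω))
      - H p (fun ω => (e ω, F ω, d ω)) - H p d  -- I(E:F|D)
    letI Ifc : ℝ := H p F + H p C - H p (fun ω => (F ω, C ω))  -- I(F:C)
    Ifc = 0 ∧
      IdeF + IdeC + Ifc - I2 + IdfE + IefD + IdeF =
        2 * IdeF + IdeC - I2 + IdfE + IefD := by
  refine ⟨?_, ?_⟩
  · exact indep_FC p₁ hp₁1 p₂ hp₂1 c f
  · have h := indep_FC p₁ hp₁1 p₂ hp₂1 c f
    linarith
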